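/- Let μ be a strong limit cardinal of cofinality ℵ₀. Then any two members of K^spc_μ are isomorphic. -/

import Mathlib

universe u
open Cardinal

/-- A group is locally finite if every finitely generated subgroup is finite. -/
def LocallyFiniteGroup (G : Type u) [Group G] : Prop :=
  ∀ s : Finset G, Set.Finite ((Subgroup.closure (s : Set G) : Subgroup G) : Set G)

/-- A group `G` is `θ`-indecomposable when every `⊆`-increasing sequence
`⟨M_i : i < θ⟩` of subgroups of `G` with union `G` contains `G` as a member. -/
def GroupIndecomp (θ : Cardinal.{u}) (G : Type u) [Group G] : Prop :=
  ∀ M : θ.ord.ToType → Subgroup G, Monotone M → (⨆ i, M i) = ⊤ → ∃ i, M i = ⊤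

/-- `G` is a universal locally finite group of cardinality `μ`. -/
def UniversalLF (μ : Cardinal.{u}) (G : Type u) [Group G] : Prop :=
  LocallyFiniteGroup G ∧ #G = μ ∧
    ∀ (H : Type u) (_ : Group H), LocallyFiniteGroup H → #H = μ →
      ∃ f : H →* G, Function.Injective f

/-- The pair `(G, H)` (with `H` embedded in `G` via `e`) is a universal
`(μ, <μ)`-amalgamation base: every locally finite group `G'` of cardinality `μ`
containing `G` embeds into `G` over `H`. -/
def UnivAmalgBase (μ : Cardinal.{u}) (H G : Type u) [Group H] [Group G] (e : H →* G) : Prop :=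
  ∀ (G' : Type u) (_ : Group G'), LocallyFiniteGroup G' → #G' = μ →
    ∀ g : G →* G', Function.Injective g →
      ∃ f : G' →* G, Function.Injective f ∧ f.comp (g.comp e) = e

/-- `G` belongs to the class `K^spc_μ`. -/
def KSpc (μ : Cardinal.{u}) (G : Type u) [Group G] : Prop :=
  LocallyFiniteGroup G ∧ #G = μ ∧
  -- (b) every small subgroup is covered by an increasing ω-chain of ℵ₀-indecomposable
  -- subgroups with small union, and G itself is such a union
  ((∀ H : Subgroup G, #H < μ →
      ∃ Hn : ℕ → Subgroup G, Monotone Hn ∧ (∀ n, GroupIndecomp ℵ₀ ↥(Hn n)) ∧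
        #(↥(⨆ n, Hn n)) < μ ∧ H ≤ ⨆ n, Hn n) ∧
    (∃ Gn : ℕ → Subgroup G, Monotone Gn ∧
      (∀ n, GroupIndecomp ℵ₀ ↥(Gn n) ∧ #(Gn n) < μ) ∧ (⨆ n, Gn n) = ⊤)) ∧
  -- (c) for every ℵ₀-indecomposable small subgroup H, (G,H) is a universal
  -- (μ,<μ)-amalgamation base
  (∀ H : Subgroup G, #H < μ → GroupIndecomp ℵ₀ ↥H →
    UnivAmalgBase μ (↥H) G H.subtype) ∧
  -- (d) compatible ℵ₀-indecomposable small extensions of small ℵ₀-indecomposable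
  -- subgroups embed over them
  (∀ H : Subgroup G, #H < μ → GroupIndecomp ℵ₀ ↥H →
    ∀ (H' : Type u) (_ : Group H'), LocallyFiniteGroup H' → #H' < μ → GroupIndecomp ℵ₀ H' →
      ∀ eH : ↥H →* H', Function.Injective eH →
        (∃ (Gp : Type u) (_ : Group Gp), LocallyFiniteGroup Gp ∧ #Gp ≤ μ ∧
          ∃ (φ : G →* Gp) (ψ : H' →* Gp), Function.Injective φ ∧ Function.Injective ψ ∧
            ∀ x : ↥H, φ (x : G) = ψ (eH x)) →
        ∃ f : H' →* G, Function.Injective f ∧ ∀ x : ↥H, f (eH x) = (x : G))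

section Aux

variable {G : Type u} [Group G]

/-- a monotone surjection onto ℕ. -/
lemma exists_mono_surj :
    ∃ e : (ℵ₀ : Cardinal.{u}).ord.ToType → ℕ, Monotone e ∧ Function.Surjective e := by
  classical
  haveI hwo : IsWellOrder (ℵ₀ : Cardinal.{u}).ord.ToType (· < ·) := isWellOrder_lt
  have htype : Ordinal.type ((· < ·) : (ℵ₀ : Cardinal.{u}).ord.ToType → _ → Prop)
      = Ordinal.omega0 := by
    conv_rhs => rw [← Cardinal.ord_aleph0]
    exact Ordinal.type_toType _
  have he : ∀ i : (ℵ₀ : Cardinal.{u}).ord.ToType,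
      ∃ n : ℕ, Ordinal.typein (· < ·) i = (n : Ordinal) := by
    intro i
    have h := Ordinal.typein_lt_type ((· < ·) : (ℵ₀ : Cardinal.{u}).ord.ToType → _ → Prop) i
    rw [htype] at h
    exact Ordinal.lt_omega0.mp h
  choose e hespec using he
  refine ⟨e, ?_, ?_⟩
  · intro i j hij
    rcases eq_or_lt_of_le hij with rfl | hlt
    · exact le_rfl
    · have h2 := (Ordinal.typein_lt_typein ((· < ·) : (ℵ₀ : Cardinal.{u}).ord.ToType → _ → Prop)).mpr hlt
      rw [hespec i, hespec j] at h2
      exact_mod_cast h2.le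
  · intro n
    have hn : (n : Ordinal.{u}) < Ordinal.type ((· < ·) : (ℵ₀ : Cardinal.{u}).ord.ToType → _ → Prop) := by
      rw [htype]; exact Ordinal.nat_lt_omega0 n
    obtain ⟨i, hi⟩ := Ordinal.typein_surj _ hn
    refine ⟨i, ?_⟩
    have h3 := hespec i
    rw [hi] at h3
    exact_mod_cast h3.symm

lemma nonempty_index : Nonempty (ℵ₀ : Cardinal.{u}).ord.ToType := by
  rw [Ordinal.toType_nonempty_iff_ne_zero]
  simp [Cardinal.ord_aleph0, Ordinal.omega0_ne_zero]

/-- ℵ₀-indecomposability for ℕ-indexed chains. -/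
lemma indecomp_nat {K : Type u} [Group K] (hK : GroupIndecomp ℵ₀ K)
    (M : ℕ → Subgroup K) (hm : Monotone M) (htop : (⨆ n, M n) = ⊤) :
    ∃ n, M n = ⊤ := by
  obtain ⟨e, hmono, hsurj⟩ := exists_mono_surj.{u}
  have h := hK (fun i => M (e i)) (fun i j hij => hm (hmono hij)) ?_
  · obtain ⟨i, hi⟩ := h
    exact ⟨e i, hi⟩
  · apply le_antisymm le_top
    rw [← htop]
    refine iSup_le fun n => ?_
    obtain ⟨i, rfl⟩ := hsurj n
    exact le_iSup (fun i => M (e i)) i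

/-- An ℵ₀-indecomposable subgroup below the sup of a monotone ℕ-chain is below a term. -/
lemma indecomp_le_chain {K : Subgroup G} (hK : GroupIndecomp ℵ₀ (↥K))
    {H : ℕ → Subgroup G} (hm : Monotone H) (hle : K ≤ ⨆ n, H n) : ∃ n, K ≤ H n := by
  have := nonempty_index.{u}
  have h := indecomp_nat hK (fun n => (H n).subgroupOf K)
    (fun a b hab => Subgroup.comap_mono (hm hab)) ?_
  · obtain ⟨n, hn⟩ := h
    refine ⟨n, fun x hx => ?_⟩
    have hn' : (H n).subgroupOf K = ⊤ := hn
    have : (⟨x, hx⟩ : K) ∈ (H n).subgroupOf K := by rw [hn']; trivial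
    exact Subgroup.mem_subgroupOf.mp this
  · apply le_antisymm le_top
    intro x _
    have hx := hle x.2
    rw [Subgroup.mem_iSup_of_directed (hm.directed_le)] at hx
    obtain ⟨n, hn⟩ := hx
    exact Subgroup.mem_iSup_of_mem n (Subgroup.mem_subgroupOf.mpr hn)

/-- Indecomposability transfers along isomorphisms. -/
lemma indecomp_congr {A B : Type u} [Group A] [Group B] (e : A ≃* B)
    (h : GroupIndecomp ℵ₀ A) : GroupIndecomp ℵ₀ B := by
  intro M hm htop
  have h2 := h (fun i => (M i).comap e.toMonoidHom)
    (fun i j hij => Subgroup.comap_mono (hm hij)) ?_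
  · obtain ⟨i, hi⟩ := h2
    refine ⟨i, ?_⟩
    rw [eq_top_iff]
    intro b _
    have hi' : (M i).comap e.toMonoidHom = ⊤ := hi
    have : e.symm b ∈ (M i).comap e.toMonoidHom := by rw [hi']; trivial
    simpa using this
  · rw [eq_top_iff]
    intro a _
    have hmem : e a ∈ ⨆ i, M i := by rw [htop]; trivial
    have := nonempty_index.{u}
    rw [Subgroup.mem_iSup_of_directed (hm.directed_le)] at hmem
    obtain ⟨i, hi⟩ := hmem
    refine le_iSup (fun i => (M i).comap e.toMonoidHom) i ?_
    simpa using hi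

end Aux

section Aux2

variable {G : Type u} [Group G]

lemma mk_inv_set (S : Set G) : #(S⁻¹ : Set G) ≤ #S := by
  refine Cardinal.mk_le_of_injective (f := fun x : (S⁻¹ : Set G) => (⟨x.1⁻¹, x.2⟩ : S)) ?_
  intro a b hab
  have := congrArg Subtype.val hab
  simpa [Subtype.ext_iff] using this

lemma mk_closure_le (S : Set G) : #(Subgroup.closure S) ≤ max ℵ₀ #S := by
  classical
  set T : Set G := S ∪ S⁻¹ with hT
  have hmem : ∀ x : ↥(Subgroup.closure S), (x : G) ∈ Submonoid.closure T := by
    intro x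
    have hx := x.2
    rw [← Subgroup.mem_toSubmonoid, Subgroup.closure_toSubmonoid] at hx
    exact hx
  have hl : ∀ x : ↥(Subgroup.closure S), ∃ l : List ↥T, ((l.map Subtype.val).prod : G) = x := by
    intro x
    obtain ⟨l, hl1, hl2⟩ := Submonoid.exists_list_of_mem_closure (hmem x)
    refine ⟨l.attach.map (fun y => (⟨y.1, hl1 y.1 y.2⟩ : ↥T)), ?_⟩
    rw [List.map_map]
    simpa using hl2
  choose F hF using hl
  have hFinj : Function.Injective F := by
    intro x y hxy
    apply Subtype.ext
    rw [← hF x, ← hF y, hxy]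
  calc #(Subgroup.closure S) ≤ #(List ↥T) := Cardinal.mk_le_of_injective hFinj
    _ ≤ max ℵ₀ #(↥T) := Cardinal.mk_list_le_max _
    _ ≤ max ℵ₀ #S := by
      refine max_le (le_max_left _ _) ?_
      have h1 : #(↥T) ≤ #S + #(S⁻¹ : Set G) := Cardinal.mk_union_le _ _
      have h2 : #S + #(S⁻¹ : Set G) ≤ #S + #S := add_le_add le_rfl (mk_inv_set S)
      rcases le_or_gt ℵ₀ #S with h | h
      · have : #S + #S = #S := Cardinal.add_eq_self h
        exact le_max_of_le_right ((h1.trans h2).trans this.le)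
      · have : #S + #S < ℵ₀ := Cardinal.add_lt_aleph0 h h
        exact le_max_of_le_left ((h1.trans h2).trans this.le)

lemma small_closure (hLF : LocallyFiniteGroup G) {μ : Cardinal.{u}} (hμ : ℵ₀ ≤ μ)
    {S : Set G} (hS : #S < μ) : #(Subgroup.closure S) < μ := by
  rcases lt_or_ge #S ℵ₀ with h | h
  · have hfin : S.Finite := Cardinal.lt_aleph0_iff_set_finite.mp h
    have h2 := hLF hfin.toFinset
    rw [Set.Finite.coe_toFinset] at h2
    exact lt_of_lt_of_le h2.lt_aleph0 hμ
  · have := mk_closure_le S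
    rw [max_eq_right h] at this
    exact lt_of_le_of_lt this hS

lemma small_sup (hLF : LocallyFiniteGroup G) {μ : Cardinal.{u}} (hμ : ℵ₀ ≤ μ)
    {A B : Subgroup G} (hA : #A < μ) (hB : #B < μ) : #(↥(A ⊔ B)) < μ := by
  rw [Subgroup.sup_eq_closure]
  refine small_closure hLF hμ ?_
  have h1 : #(↥((A : Set G) ∪ B)) ≤ #A + #B := Cardinal.mk_union_le _ _
  exact lt_of_le_of_lt h1 (Cardinal.add_lt_of_lt hμ hA hB)

lemma mk_bot_lt {μ : Cardinal.{u}} (hμ : ℵ₀ ≤ μ) : #(↥(⊥ : Subgroup G)) < μ := by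
  have : ((⊥ : Subgroup G) : Set G).Finite := by
    simp [Subgroup.coe_bot]
  exact lt_of_lt_of_le this.lt_aleph0 hμ

lemma indecomp_bot : GroupIndecomp ℵ₀ (↥(⊥ : Subgroup G)) := by
  intro M hm htop
  obtain ⟨i⟩ := nonempty_index.{u}
  refine ⟨i, ?_⟩
  rw [eq_top_iff]
  intro x _
  have hx : x = 1 := Subsingleton.elim x 1
  rw [hx]
  exact one_mem _

lemma mk_map_eq {H : Type u} [Group H] (f : G →* H) (hf : Function.Injective f)
    (A : Subgroup G) : #(↥(Subgroup.map f A)) = #A :=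
  (Cardinal.mk_congr (Subgroup.equivMapOfInjective A f hf).toEquiv).symm

lemma indecomp_map {H : Type u} [Group H] (f : G →* H) (hf : Function.Injective f)
    {A : Subgroup G} (hA : GroupIndecomp ℵ₀ (↥A)) :
    GroupIndecomp ℵ₀ (↥(Subgroup.map f A)) :=
  indecomp_congr (Subgroup.equivMapOfInjective A f hf) hA

lemma LF_prod {H : Type u} [Group H] (hG : LocallyFiniteGroup G) (hH : LocallyFiniteGroup H) :
    LocallyFiniteGroup (G × H) := by
  classical
  intro s
  set A : Subgroup G := Subgroup.closure (↑(s.image Prod.fst) : Set G) with hA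
  set B : Subgroup H := Subgroup.closure (↑(s.image Prod.snd) : Set H) with hB
  have hAfin : Set.Finite (A : Set G) := hG _
  have hBfin : Set.Finite (B : Set H) := hH _
  have hle : Subgroup.closure (↑s : Set (G × H)) ≤ A.prod B := by
    rw [Subgroup.closure_le]
    intro x hx
    rw [SetLike.mem_coe, Subgroup.mem_prod]
    constructor
    · exact Subgroup.subset_closure (by
        simp only [Finset.coe_image, Set.mem_image]
        exact ⟨x, hx, rfl⟩)
    · exact Subgroup.subset_closure (by
        simp only [Finset.coe_image, Set.mem_image]
        exact ⟨x, hx, rfl⟩)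
  refine Set.Finite.subset ((hAfin.prod hBfin).subset ?_) hle
  rw [Subgroup.coe_prod]

lemma covering {μ : Cardinal.{u}} (hLF : LocallyFiniteGroup G) (hμ : ℵ₀ ≤ μ)
    (hb1 : ∀ H : Subgroup G, #H < μ →
      ∃ Hn : ℕ → Subgroup G, Monotone Hn ∧ (∀ n, GroupIndecomp ℵ₀ ↥(Hn n)) ∧
        #(↥(⨆ n, Hn n)) < μ ∧ H ≤ ⨆ n, Hn n)
    (K₁ K₂ K₃ : Subgroup G) (h1 : #K₁ < μ) (h2 : #K₂ < μ) (h3 : #K₃ < μ)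
    (hi1 : GroupIndecomp ℵ₀ (↥K₁)) (hi2 : GroupIndecomp ℵ₀ (↥K₂))
    (hi3 : GroupIndecomp ℵ₀ (↥K₃)) :
    ∃ A : Subgroup G, K₁ ≤ A ∧ K₂ ≤ A ∧ K₃ ≤ A ∧ #A < μ ∧ GroupIndecomp ℵ₀ (↥A) := by
  have hK : #(↥(K₁ ⊔ K₂ ⊔ K₃)) < μ := small_sup hLF hμ (small_sup hLF hμ h1 h2) h3
  obtain ⟨Hn, hm, hind, hsmall, hle⟩ := hb1 _ hK
  obtain ⟨n1, hn1⟩ := indecomp_le_chain hi1 hm (le_trans (le_sup_left.trans le_sup_left) hle)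
  obtain ⟨n2, hn2⟩ := indecomp_le_chain hi2 hm (le_trans (le_sup_right.trans le_sup_left) hle)
  obtain ⟨n3, hn3⟩ := indecomp_le_chain hi3 hm (le_trans le_sup_right hle)
  refine ⟨Hn (max (max n1 n2) n3), hn1.trans (hm ((le_max_left n1 n2).trans (le_max_left _ n3))),
    hn2.trans (hm ((le_max_right n1 n2).trans (le_max_left _ n3))),
    hn3.trans (hm (le_max_right _ n3)), ?_, hind _⟩
  have : Hn (max (max n1 n2) n3) ≤ ⨆ n, Hn n := le_iSup Hn _
  exact lt_of_le_of_lt (Cardinal.mk_le_mk_of_subset this) hsmall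

end Aux2

section Main

theorem KSpc_unique_aux (μ : Cardinal.{u})
    (hsl : μ.IsStrongLimit)
    (G₁ G₂ : Type u) [Group G₁] [Group G₂]
    (h₁ : KSpc μ G₁) (h₂ : KSpc μ G₂) :
    Nonempty (G₁ ≃* G₂) := by
  classical
  obtain ⟨hLF₁, hmk₁, ⟨hb1₁, G1c, hG1m, hG1p, hG1top⟩, hc₁, -⟩ := h₁
  obtain ⟨hLF₂, hmk₂, ⟨hb1₂, G2c, hG2m, hG2p, hG2top⟩, hc₂, -⟩ := h₂
  have hμ : ℵ₀ ≤ μ := hsl.aleph0_le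
  have hLFP : LocallyFiniteGroup (G₁ × G₂) := LF_prod hLF₁ hLF₂
  have hmkP : #(G₁ × G₂) = μ := by
    rw [Cardinal.mk_prod, Cardinal.lift_id, Cardinal.lift_id, hmk₁, hmk₂,
      Cardinal.mul_eq_self hμ]
  -- base embedding
  have hbase : ∃ w : G₁ →* G₂, Function.Injective w := by
    obtain ⟨f, hfinj, -⟩ := hc₂ ⊥ (mk_bot_lt hμ) indecomp_bot (G₁ × G₂) inferInstance
      hLFP hmkP (MonoidHom.inr G₁ G₂) (fun a b hab => congrArg Prod.snd hab)
    exact ⟨f.comp (MonoidHom.inl G₁ G₂),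
      hfinj.comp (fun a b hab => congrArg Prod.fst hab)⟩
  -- the inductive step
  have step : ∀ (n : ℕ) (w : G₁ →* G₂) (A : Subgroup G₁), Function.Injective w → #A < μ →
      GroupIndecomp ℵ₀ (↥A) →
      ∃ (w' : G₁ →* G₂) (A' : Subgroup G₁), Function.Injective w' ∧ #A' < μ ∧
        GroupIndecomp ℵ₀ (↥A') ∧ A ≤ A' ∧ (∀ x, x ∈ A → w' x = w x) ∧
        G1c (n+1) ≤ A' ∧ G2c (n+1) ≤ Subgroup.map w' A' := by
    intro n w A hw hAs hAi
    have hBs : #(↥(Subgroup.map w A)) < μ := by rw [mk_map_eq w hw]; exact hAs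
    have hBi : GroupIndecomp ℵ₀ (↥(Subgroup.map w A)) := indecomp_map w hw hAi
    obtain ⟨D, hBD, hGD, -, hDs, hDi⟩ := covering hLF₂ hμ hb1₂ (Subgroup.map w A)
      (G2c (n+1)) ⊥ hBs (hG2p (n+1)).2 (mk_bot_lt hμ) hBi (hG2p (n+1)).1 indecomp_bot
    obtain ⟨v, hvinj, hvcomp⟩ := hc₁ A hAs hAi G₂ inferInstance hLF₂ hmk₂ w hw
    have hv : ∀ x : ↥A, v (w (x : G₁)) = (x : G₁) := fun x => DFunLike.congr_fun hvcomp x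
    have hvDs : #(↥(Subgroup.map v D)) < μ := by rw [mk_map_eq v hvinj]; exact hDs
    obtain ⟨A', hAA', hGA', hvDA', hA's, hA'i⟩ := covering hLF₁ hμ hb1₁ A (G1c (n+1))
      (Subgroup.map v D) hAs (hG1p (n+1)).2 hvDs hAi (hG1p (n+1)).1
      (indecomp_map v hvinj hDi)
    obtain ⟨w', hw'inj, hw'comp⟩ := hc₂ D hDs hDi G₁ inferInstance hLF₁ hmk₁ v hvinj
    have hw' : ∀ y : ↥D, w' (v (y : G₂)) = (y : G₂) := fun y => DFunLike.congr_fun hw'comp y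
    refine ⟨w', A', hw'inj, hA's, hA'i, hAA', ?_, hGA', ?_⟩
    · intro x hx
      have h2 : w x ∈ D := hBD (Subgroup.mem_map_of_mem w hx)
      have h3 : w' (v (w x)) = w x := hw' ⟨w x, h2⟩
      have h4 : v (w x) = x := hv ⟨x, hx⟩
      rw [h4] at h3
      exact h3
    · intro y hy
      have hyD : y ∈ D := hGD hy
      have h2 : v y ∈ A' := hvDA' (Subgroup.mem_map_of_mem v hyD)
      exact Subgroup.mem_map.mpr ⟨v y, h2, hw' ⟨y, hyD⟩⟩
  obtain ⟨u₀, hu₀⟩ := hbase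
  -- the recursively constructed sequence of approximations
  have step' : ∀ (n : ℕ)
      (p : {p : (G₁ →* G₂) × Subgroup G₁ //
        Function.Injective p.1 ∧ #p.2 < μ ∧ GroupIndecomp ℵ₀ (↥p.2)}),
      ∃ q : {q : (G₁ →* G₂) × Subgroup G₁ //
        Function.Injective q.1 ∧ #q.2 < μ ∧ GroupIndecomp ℵ₀ (↥q.2)},
      p.1.2 ≤ q.1.2 ∧ (∀ x, x ∈ p.1.2 → q.1.1 x = p.1.1 x) ∧ G1c (n+1) ≤ q.1.2 ∧
        G2c (n+1) ≤ Subgroup.map q.1.1 q.1.2 := by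
    rintro n ⟨⟨w, A⟩, hinj, hs, hi⟩
    obtain ⟨w', A', h1, h2, h3, h4, h5, h6, h7⟩ := step n w A hinj hs hi
    exact ⟨⟨(w', A'), h1, h2, h3⟩, h4, h5, h6, h7⟩
  let p0 : {p : (G₁ →* G₂) × Subgroup G₁ //
      Function.Injective p.1 ∧ #p.2 < μ ∧ GroupIndecomp ℵ₀ (↥p.2)} :=
    ⟨(u₀, ⊥), hu₀, mk_bot_lt hμ, indecomp_bot⟩
  let seq : ℕ → {p : (G₁ →* G₂) × Subgroup G₁ //
      Function.Injective p.1 ∧ #p.2 < μ ∧ GroupIndecomp ℵ₀ (↥p.2)} :=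
    fun n => Nat.rec p0 (fun k ih => (step' k ih).choose) n
  have hseq : ∀ n, (seq n).1.2 ≤ (seq (n+1)).1.2 ∧
      (∀ x, x ∈ (seq n).1.2 → (seq (n+1)).1.1 x = (seq n).1.1 x) ∧
      G1c (n+1) ≤ (seq (n+1)).1.2 ∧
      G2c (n+1) ≤ Subgroup.map (seq (n+1)).1.1 (seq (n+1)).1.2 :=
    fun n => (step' n (seq n)).choose_spec
  set A : ℕ → Subgroup G₁ := fun n => (seq n).1.2 with hA_def
  set uu : ℕ → (G₁ →* G₂) := fun n => (seq n).1.1 with huu_def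
  have hmonoA : Monotone A := monotone_nat_of_le_succ (fun n => (hseq n).1)
  have hinj : ∀ n, Function.Injective (uu n) := fun n => (seq n).2.1
  have hagree : ∀ m n, m ≤ n → ∀ x, x ∈ A m → uu n x = uu m x := by
    intro m n hmn
    induction n, hmn using Nat.le_induction with
    | base => intro x _; rfl
    | succ n hmn ih =>
      intro x hx
      have hx' : x ∈ A n := hmonoA hmn hx
      rw [(hseq n).2.1 x hx', ih x hx]
  have hcov1 : ∀ x : G₁, ∃ n, x ∈ A n := by
    intro x
    have hx : x ∈ ⨆ n, G1c n := by rw [hG1top]; trivial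
    rw [Subgroup.mem_iSup_of_directed hG1m.directed_le] at hx
    obtain ⟨k, hk⟩ := hx
    exact ⟨k + 1, (hseq k).2.2.1 (hG1m (Nat.le_succ k) hk)⟩
  have hcov2 : ∀ y : G₂, ∃ n, y ∈ Subgroup.map (uu n) (A n) := by
    intro y
    have hy : y ∈ ⨆ n, G2c n := by rw [hG2top]; trivial
    rw [Subgroup.mem_iSup_of_directed hG2m.directed_le] at hy
    obtain ⟨k, hk⟩ := hy
    exact ⟨k + 1, (hseq k).2.2.2 (hG2m (Nat.le_succ k) hk)⟩
  choose N hN using hcov1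
  have hwd : ∀ n x, x ∈ A n → uu (N x) x = uu n x := by
    intro n x hx
    rcases le_total (N x) n with h | h
    · exact (hagree (N x) n h x (hN x)).symm
    · exact hagree n (N x) h x hx
  have hmul : ∀ x y : G₁, uu (N (x * y)) (x * y) = uu (N x) x * uu (N y) y := by
    intro x y
    have hx : x ∈ A (max (max (N x) (N y)) (N (x * y))) :=
      hmonoA (le_trans (le_max_left _ _) (le_max_left _ _)) (hN x)
    have hy : y ∈ A (max (max (N x) (N y)) (N (x * y))) :=
      hmonoA (le_trans (le_max_right _ _) (le_max_left _ _)) (hN y)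
    have hxy : x * y ∈ A (max (max (N x) (N y)) (N (x * y))) :=
      hmonoA (le_max_right _ _) (hN (x * y))
    rw [hwd _ _ hxy, hwd _ _ hx, hwd _ _ hy, map_mul]
  have hFinj : Function.Injective (fun x => uu (N x) x) := by
    intro x y hxy
    have hx : x ∈ A (max (N x) (N y)) := hmonoA (le_max_left _ _) (hN x)
    have hy : y ∈ A (max (N x) (N y)) := hmonoA (le_max_right _ _) (hN y)
    have : uu (max (N x) (N y)) x = uu (max (N x) (N y)) y := by
      rw [← hwd _ _ hx, ← hwd _ _ hy]
      exact hxy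
    exact hinj _ this
  have hFsurj : Function.Surjective (fun x => uu (N x) x) := by
    intro y
    obtain ⟨n, hy⟩ := hcov2 y
    obtain ⟨x, hx, hux⟩ := Subgroup.mem_map.mp hy
    exact ⟨x, (hwd n x hx).trans hux⟩
  exact ⟨MulEquiv.ofBijective (MonoidHom.mk' (fun x => uu (N x) x) hmul) ⟨hFinj, hFsurj⟩⟩

end Main

/-- For `μ` a strong limit cardinal of cofinality `ℵ₀`, any two members
of `K^spc_μ` are isomorphic. -/
theorem KSpc_unique (μ : Cardinal.{u})
    (hsl : μ.IsStrongLimit) (hcof : μ.ord.cof = ℵ₀)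
    (G₁ G₂ : Type u) [Group G₁] [Group G₂]
    (h₁ : KSpc μ G₁) (h₂ : KSpc μ G₂) :
    Nonempty (G₁ ≃* G₂) := by
  exact KSpc_unique_aux μ hsl G₁ G₂ h₁ h₂
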